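/- Define σ(T) = (Σ_{p∈T} p)^(Σ_{p∈T} p) for a finite multiset T of positive reals, A_k(p₁,…,pₙ) = Π_{S ⊆ {p₁,…,pₙ}, |S|=k} σ(S), and μ(p₁,…,pₙ) = Σ_{k=1}^{n} (−1)^{n−k} log A_k. Then for fixed p₁,…,pₙ > 0 with n ≥ 0, lim_{x→0⁺} μ(p₁,…,pₙ,x) = 0. -/

import Mathlib

/-- The interior loss measure `μ(p₁,…,pₙ)`: since
`log A_k = ∑_{|S|=k} (∑_{p∈S} p) · log (∑_{p∈S} p)`, we have
`μ = ∑_{∅ ≠ S} (−1)^{n−|S|} (∑ S) log (∑ S)`. -/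
noncomputable def mu {n : ℕ} (p : Fin n → ℝ) : ℝ :=
  ∑ S ∈ Finset.univ.powerset.filter (fun S : Finset (Fin n) => S.Nonempty),
    (-1 : ℝ) ^ (n - S.card) * ((∑ i ∈ S, p i) * Real.log (∑ i ∈ S, p i))

lemma mu_snoc_zero {n : ℕ} (p : Fin n → ℝ) : mu (Fin.snoc p (0:ℝ)) = 0 := by
  classical
  set q : Fin (n+1) → ℝ := Fin.snoc p 0 with hq
  have hqlast : q (Fin.last n) = 0 := by simp [hq]
  set F : Finset (Fin (n+1)) → ℝ := fun S =>
    (-1 : ℝ) ^ (n + 1 - S.card) * ((∑ i ∈ S, q i) * Real.log (∑ i ∈ S, q i)) with hF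
  have hstep : mu q = ∑ S ∈ (Finset.univ : Finset (Fin (n+1))).powerset, F S := by
    unfold mu
    refine Finset.sum_subset (Finset.filter_subset _ _) ?_
    intro S hS hnS
    have : S = ∅ := by
      by_contra h
      exact hnS (Finset.mem_filter.2 ⟨hS, Finset.nonempty_iff_ne_empty.2 h⟩)
    subst this
    simp [hF]
  rw [hq] at hstep ⊢
  rw [hstep]
  set g : Finset (Fin (n+1)) → Finset (Fin (n+1)) := fun S =>
    if Fin.last n ∈ S then S.erase (Fin.last n) else insert (Fin.last n) S with hg
  have hsum_g : ∀ S : Finset (Fin (n+1)), (∑ i ∈ g S, q i) = ∑ i ∈ S, q i := by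
    intro S
    by_cases h : Fin.last n ∈ S
    · simp only [hg, if_pos h]
      exact Finset.sum_erase _ hqlast
    · simp only [hg, if_neg h]
      rw [Finset.sum_insert h, hqlast, zero_add]
  refine Finset.sum_ninvolution g ?_ ?_ ?_ ?_
  · intro S
    by_cases h : Fin.last n ∈ S
    · have hc1 : 1 ≤ S.card := Finset.card_pos.2 ⟨_, h⟩
      have hc2 : S.card ≤ n + 1 := (Finset.card_le_univ S).trans_eq (Fintype.card_fin _)
      have hcard : (g S).card = S.card - 1 := by
        simp [hg, if_pos h, Finset.card_erase_of_mem h]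
      have hexp : n + 1 - (S.card - 1) = (n + 1 - S.card) + 1 := by omega
      simp only [hF, hsum_g, hcard, hexp, pow_succ]
      ring
    · have hc2 : (insert (Fin.last n) S).card ≤ n + 1 := (Finset.card_le_univ _).trans_eq (Fintype.card_fin _)
      have hcard : (g S).card = S.card + 1 := by
        simp [hg, if_neg h, Finset.card_insert_of_notMem h]
      have hc3 : S.card ≤ n := by
        rw [Finset.card_insert_of_notMem h] at hc2; omega
      have hexp : n + 1 - S.card = (n + 1 - (S.card + 1)) + 1 := by omega
      simp only [hF, hsum_g, hcard]
      rw [hexp, pow_succ]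
      ring
  · intro S _
    by_cases h : Fin.last n ∈ S
    · simp only [hg, if_pos h]
      intro heq
      exact (heq ▸ Finset.notMem_erase (Fin.last n) S) h
    · simp only [hg, if_neg h]
      intro heq
      exact h (heq ▸ Finset.mem_insert_self _ _)
  · intro S
    exact Finset.mem_powerset.2 (Finset.subset_univ _)
  · intro S
    by_cases h : Fin.last n ∈ S
    · simp [hg, if_pos h, Finset.notMem_erase, Finset.insert_erase h]
    · simp [hg, if_neg h, Finset.mem_insert_self, Finset.erase_insert h]

theorem mu_tendsto_zero {n : ℕ} (p : Fin n → ℝ) (hp : ∀ i, 0 < p i) :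
    Filter.Tendsto (fun x : ℝ => mu (Fin.snoc p x))
      (nhdsWithin 0 (Set.Ioi 0)) (nhds 0) := by
  have hcont : Continuous fun x : ℝ => mu (Fin.snoc p x) := by
    unfold mu
    refine continuous_finset_sum _ (fun S _ => ?_)
    have hs : Continuous fun x : ℝ => ∑ i ∈ S, Fin.snoc p x i := by
      refine continuous_finset_sum _ (fun i _ => ?_)
      refine Fin.lastCases ?_ (fun j => ?_) i
      · simpa using continuous_id'
      · simpa using continuous_const
    exact continuous_const.mul (Real.continuous_mul_log.comp hs)
  have h0 : mu (Fin.snoc p (0:ℝ)) = 0 := mu_snoc_zero p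
  have := ((hcont.tendsto 0).mono_left (nhdsWithin_le_nhds (s := Set.Ioi 0)))
  simpa [h0] using this
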